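/- Let L be a Lie algebra with a Z-grading L = L_{-2} ⊕ L_0 ⊕ L_2 where L_0 = [L_{-2}, L_2]. Any bilinear map (·|·) : L_{-2} × L_2 → F satisfying ([a,[c,d]]|b) + (a|[b,[c,d]]) = ([[a,b],c]|d) + (c|[[a,b],d]) for all a,c ∈ L_{-2}, b,d ∈ L_2 extends uniquely to a 2-cocycle on L (i.e. a skew-symmetric bilinear form ψ with ψ([x,y]|z) + ψ([y,z]|x) + ψ([z,x]|y) = 0) vanishing on L_i × L_j for i + j ≠ 0. -/

import Mathlib

set_option maxHeartbeats 1000000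


/-- a bilinear map on `L₋₂ × L₂` satisfying identity (1) extends uniquely
to a 2-cocycle on the short Z-graded Lie algebra `L = L₋₂ ⊕ L₀ ⊕ L₂` with `L₀ = [L₋₂, L₂]`,
vanishing on components of nonzero total degree. -/
theorem stmt0 (F : Type*) [Field F] [CharZero F]
    (L : Type*) [LieRing L] [LieAlgebra F L]
    (Lm Lz Lp : Submodule F L)
    -- `L = L₋₂ ⊕ L₀ ⊕ L₂` (unique decomposition)
    (hdec : ∀ x : L, ∃! t : Lm × Lz × Lp, x = (t.1 : L) + (t.2.1 : L) + (t.2.2 : L))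
    -- grading relations
    (hmm : ∀ a ∈ Lm, ∀ b ∈ Lm, ⁅a, b⁆ = 0)
    (hpp : ∀ a ∈ Lp, ∀ b ∈ Lp, ⁅a, b⁆ = 0)
    (hmp : ∀ a ∈ Lm, ∀ b ∈ Lp, ⁅a, b⁆ ∈ Lz)
    (hzm : ∀ a ∈ Lz, ∀ b ∈ Lm, ⁅a, b⁆ ∈ Lm)
    (hzp : ∀ a ∈ Lz, ∀ b ∈ Lp, ⁅a, b⁆ ∈ Lp)
    (hzz : ∀ a ∈ Lz, ∀ b ∈ Lz, ⁅a, b⁆ ∈ Lz)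
    -- `L₀ = [L₋₂, L₂]`
    (hz : Lz = Submodule.span F {x : L | ∃ a ∈ Lm, ∃ b ∈ Lp, x = ⁅a, b⁆})
    -- the given bilinear map (only its values on `Lm × Lp` matter)
    (B : L →ₗ[F] L →ₗ[F] F)
    -- identity (1)
    (hB : ∀ a ∈ Lm, ∀ c ∈ Lm, ∀ b ∈ Lp, ∀ d ∈ Lp,
      B ⁅a, ⁅c, d⁆⁆ b + B a ⁅b, ⁅c, d⁆⁆ = B ⁅⁅a, b⁆, c⁆ d + B c ⁅⁅a, b⁆, d⁆) :
    ∃! ψ : L →ₗ[F] L →ₗ[F] F,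
      (∀ x y : L, ψ x y = - ψ y x) ∧
      (∀ x y z : L, ψ ⁅x, y⁆ z + ψ ⁅y, z⁆ x + ψ ⁅z, x⁆ y = 0) ∧
      (∀ a ∈ Lm, ∀ b ∈ Lp, ψ a b = B a b) ∧
      (∀ a ∈ Lm, ∀ b ∈ Lm, ψ a b = 0) ∧
      (∀ a ∈ Lp, ∀ b ∈ Lp, ψ a b = 0) ∧
      (∀ a ∈ Lz, ∀ b ∈ Lm, ψ a b = 0) ∧
      (∀ a ∈ Lz, ∀ b ∈ Lp, ψ a b = 0) := by
  classical
  -- extra bracket membership lemmas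
  have bmz : ∀ a ∈ Lm, ∀ w ∈ Lz, ⁅a, w⁆ ∈ Lm := by
    intro a ha w hw; rw [← lie_skew]; exact neg_mem (hzm w hw a ha)
  have bpz : ∀ b ∈ Lp, ∀ w ∈ Lz, ⁅b, w⁆ ∈ Lp := by
    intro b hb w hw; rw [← lie_skew]; exact neg_mem (hzp w hw b hb)
  have bpm : ∀ b ∈ Lp, ∀ a ∈ Lm, ⁅b, a⁆ ∈ Lz := by
    intro b hb a ha; rw [← lie_skew]; exact neg_mem (hmp a ha b hb)
  -- projections
  choose dec hdeq hduniq using hdec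
  have huniq : ∀ (x a w b : L), a ∈ Lm → w ∈ Lz → b ∈ Lp → x = a + w + b →
      ((dec x).1 : L) = a ∧ ((dec x).2.1 : L) = w ∧ ((dec x).2.2 : L) = b := by
    intro x a w b ha hw hb hx
    have h := hduniq x (⟨a, ha⟩, ⟨w, hw⟩, ⟨b, hb⟩) hx
    refine ⟨?_, ?_, ?_⟩ <;> rw [← h]
  obtain ⟨πm, πz, πp, hπm, hπz, hπp, hsum, hun⟩ :
      ∃ (πm πz πp : L →ₗ[F] L),
        (∀ x, πm x ∈ Lm) ∧ (∀ x, πz x ∈ Lz) ∧ (∀ x, πp x ∈ Lp) ∧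
        (∀ x, x = πm x + πz x + πp x) ∧
        (∀ (x a w b : L), a ∈ Lm → w ∈ Lz → b ∈ Lp → x = a + w + b →
          πm x = a ∧ πz x = w ∧ πp x = b) := by
    have hadd : ∀ x y : L,
        ((dec (x + y)).1 : L) = (dec x).1 + (dec y).1 ∧
        ((dec (x + y)).2.1 : L) = (dec x).2.1 + (dec y).2.1 ∧
        ((dec (x + y)).2.2 : L) = (dec x).2.2 + (dec y).2.2 := by
      intro x y
      refine huniq (x + y) _ _ _ (add_mem (dec x).1.2 (dec y).1.2)
        (add_mem (dec x).2.1.2 (dec y).2.1.2) (add_mem (dec x).2.2.2 (dec y).2.2.2) ?_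
      conv_lhs => rw [hdeq x, hdeq y]
      abel
    have hsmul : ∀ (c : F) (x : L),
        ((dec (c • x)).1 : L) = c • ((dec x).1 : L) ∧
        ((dec (c • x)).2.1 : L) = c • ((dec x).2.1 : L) ∧
        ((dec (c • x)).2.2 : L) = c • ((dec x).2.2 : L) := by
      intro c x
      refine huniq (c • x) _ _ _ (Submodule.smul_mem _ c (dec x).1.2)
        (Submodule.smul_mem _ c (dec x).2.1.2) (Submodule.smul_mem _ c (dec x).2.2.2) ?_
      conv_lhs => rw [hdeq x]
      rw [smul_add, smul_add]
    refine ⟨⟨⟨fun x => ((dec x).1 : L), fun x y => (hadd x y).1⟩, fun c x => (hsmul c x).1⟩,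
      ⟨⟨fun x => ((dec x).2.1 : L), fun x y => (hadd x y).2.1⟩, fun c x => (hsmul c x).2.1⟩,
      ⟨⟨fun x => ((dec x).2.2 : L), fun x y => (hadd x y).2.2⟩, fun c x => (hsmul c x).2.2⟩,
      fun x => (dec x).1.2, fun x => (dec x).2.1.2, fun x => (dec x).2.2.2,
      fun x => hdeq x, fun x a w b ha hw hb hx => huniq x a w b ha hw hb hx⟩
  -- behavior of projections on components
  have proj_m : ∀ a ∈ Lm, πm a = a ∧ πz a = 0 ∧ πp a = 0 := by
    intro a ha; exact hun a a 0 0 ha (zero_mem _) (zero_mem _) (by abel)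
  have proj_z : ∀ w ∈ Lz, πm w = 0 ∧ πz w = w ∧ πp w = 0 := by
    intro w hw; exact hun w 0 w 0 (zero_mem _) hw (zero_mem _) (by abel)
  have proj_p : ∀ b ∈ Lp, πm b = 0 ∧ πz b = 0 ∧ πp b = b := by
    intro b hb; exact hun b 0 0 b (zero_mem _) (zero_mem _) hb (by abel)
  -- construction of the middle form C
  obtain ⟨C, hCbr, hCz1, hCz2, hCproj⟩ :
      ∃ C : L →ₗ[F] L →ₗ[F] F,
        (∀ a ∈ Lm, ∀ b ∈ Lp, ∀ z ∈ Lz, C ⁅a, b⁆ z = B ⁅a, z⁆ b + B a ⁅b, z⁆) ∧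
        (∀ x y : L, πz x = 0 → C x y = 0) ∧
        (∀ x y : L, πz y = 0 → C x y = 0) ∧
        (∀ x y : L, C x y = C (πz x) (πz y)) := by
    set g : ↥Lm × ↥Lp → L := fun q => ⁅(q.1 : L), (q.2 : L)⁆ with hg
    set Hf : ↥Lm × ↥Lp → (L →ₗ[F] F) := fun q =>
      (B.flip (q.2 : L)) ∘ₗ (LieAlgebra.ad F L (q.1 : L) : Module.End F L) +
      (B (q.1 : L)) ∘ₗ (LieAlgebra.ad F L (q.2 : L) : Module.End F L) with hHf
    have Hf_apply : ∀ (q : ↥Lm × ↥Lp) (z : L),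
        Hf q z = B ⁅(q.1 : L), z⁆ (q.2 : L) + B (q.1 : L) ⁅(q.2 : L), z⁆ := by
      intro q z
      simp [hHf, LieAlgebra.ad_apply]
    set β : (↥Lm × ↥Lp →₀ F) →ₗ[F] L := Finsupp.linearCombination F g with hβ
    set Ht : (↥Lm × ↥Lp →₀ F) →ₗ[F] (L →ₗ[F] F) := Finsupp.linearCombination F Hf with hHt
    have hrange : LinearMap.range β = Lz := by
      rw [hβ, Finsupp.range_linearCombination, hz]
      congr 1
      ext x
      constructor
      · rintro ⟨q, rfl⟩
        exact ⟨(q.1 : L), q.1.2, (q.2 : L), q.2.2, rfl⟩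
      · rintro ⟨a, ha, b, hb, rfl⟩
        exact ⟨(⟨a, ha⟩, ⟨b, hb⟩), rfl⟩
    set β' : (↥Lm × ↥Lp →₀ F) →ₗ[F] ↥Lz :=
      LinearMap.codRestrict Lz β (fun c => hrange ▸ LinearMap.mem_range_self β c) with hβ'
    have hsurj : LinearMap.range β' = ⊤ := by
      rw [LinearMap.range_eq_top]
      intro w
      have hw : (w : L) ∈ LinearMap.range β := by rw [hrange]; exact w.2
      obtain ⟨c, hc⟩ := hw
      exact ⟨c, Subtype.ext hc⟩
    obtain ⟨s, hs⟩ := β'.exists_rightInverse_of_surjective hsurj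
    have hβs : ∀ w : ↥Lz, β (s w) = (w : L) := by
      intro w
      have := LinearMap.congr_fun hs w
      simpa [hβ'] using congrArg Subtype.val this
    -- claim A
    have hA : ∀ (l : ↥Lm × ↥Lp →₀ F), ∀ c ∈ Lm, ∀ d ∈ Lp,
        Ht l ⁅c, d⁆ = B ⁅β l, c⁆ d + B c ⁅β l, d⁆ := by
      intro l c hc d hd
      induction l using Finsupp.induction_linear with
      | zero => simp
      | add f g' hf hg' =>
        rw [map_add, map_add, LinearMap.add_apply]
        rw [hf, hg']
        simp only [add_lie, map_add, LinearMap.add_apply]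
        ring
      | single q r =>
        simp only [hHt, hβ, Finsupp.linearCombination_single, LinearMap.smul_apply,
          Hf_apply, hg, smul_lie, map_smul, LinearMap.smul_apply, smul_add, smul_eq_mul]
        linear_combination r * hB (q.1 : L) q.1.2 c hc (q.2 : L) q.2.2 d hd
    -- claim B : well-definedness
    have hker : ∀ (l : ↥Lm × ↥Lp →₀ F), β l = 0 → ∀ z ∈ Lz, Ht l z = 0 := by
      intro l hl z hzmem
      rw [hz] at hzmem
      induction hzmem using Submodule.span_induction with
      | mem x hx =>
        obtain ⟨a, ha, b, hb, rfl⟩ := hx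
        rw [hA l a ha b hb, hl]
        simp
      | zero => simp
      | add x y _ _ hx hy => rw [map_add, hx, hy]; ring
      | smul c x _ hx => rw [map_smul, hx, smul_zero]
    set πz' : L →ₗ[F] ↥Lz := LinearMap.codRestrict Lz πz hπz with hπz'
    refine ⟨(Ht ∘ₗ s ∘ₗ πz').compl₂ πz, ?_, ?_, ?_, ?_⟩
    · intro a ha b hb z hzmem
      have hπzb : πz ⁅a, b⁆ = ⁅a, b⁆ := (proj_z _ (hmp a ha b hb)).2.1
      have hπzz : πz z = z := (proj_z z hzmem).2.1
      have hπz'b : πz' ⁅a, b⁆ = ⟨⁅a, b⁆, hmp a ha b hb⟩ := Subtype.ext hπzb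
      simp only [LinearMap.compl₂_apply, LinearMap.comp_apply, hπz'b, hπzz]
      set l : ↥Lm × ↥Lp →₀ F := s ⟨⁅a, b⁆, hmp a ha b hb⟩ with hl
      set l₀ : ↥Lm × ↥Lp →₀ F := Finsupp.single (⟨a, ha⟩, ⟨b, hb⟩) (1 : F) with hl₀
      have hβl : β l = ⁅a, b⁆ := hβs _
      have hβl₀ : β l₀ = ⁅a, b⁆ := by
        rw [hl₀, hβ, Finsupp.linearCombination_single, one_smul]
      have hk := hker (l - l₀) (by rw [map_sub, hβl, hβl₀, sub_self]) z hzmem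
      rw [map_sub, LinearMap.sub_apply, sub_eq_zero] at hk
      rw [hk]
      rw [hHt, hl₀, Finsupp.linearCombination_single, one_smul, Hf_apply]
    · intro x y hx
      have : πz' x = 0 := Subtype.ext hx
      simp [LinearMap.compl₂_apply, this]
    · intro x y hy
      simp [LinearMap.compl₂_apply, hy]
    · intro x y
      have h1 : πz' (πz x) = πz' x := Subtype.ext (by
        simp only [hπz', LinearMap.codRestrict_apply]
        exact (proj_z (πz x) (hπz x)).2.1)
      have h2 : πz (πz y) = πz y := (proj_z (πz y) (hπz y)).2.1
      simp only [LinearMap.compl₂_apply, LinearMap.comp_apply, h1, h2]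
  -- the candidate 2-cocycle
  obtain ⟨ψ, ψapp⟩ :
      ∃ ψ : L →ₗ[F] L →ₗ[F] F,
        ∀ x y, ψ x y = B (πm x) (πp y) - B (πm y) (πp x) + C x y :=
    ⟨B.compl₁₂ πm πp - (B.compl₁₂ πm πp).flip + C.compl₁₂ LinearMap.id LinearMap.id,
      fun x y => by
        simp [LinearMap.compl₁₂_apply, LinearMap.sub_apply, LinearMap.add_apply]⟩
  -- component values of ψ
  have ψmp : ∀ a ∈ Lm, ∀ b ∈ Lp, ψ a b = B a b := by
    intro a ha b hb
    rw [ψapp, (proj_m a ha).1, (proj_p b hb).2.2, (proj_p b hb).1,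
      hCz1 a b (proj_m a ha).2.1]
    simp
  have ψpm : ∀ a ∈ Lm, ∀ b ∈ Lp, ψ b a = -B a b := by
    intro a ha b hb
    rw [ψapp, (proj_m a ha).1, (proj_p b hb).2.2, (proj_p b hb).1,
      hCz1 b a (proj_p b hb).2.1]
    simp
  have ψmm : ∀ a ∈ Lm, ∀ b ∈ Lm, ψ a b = 0 := by
    intro a ha b hb
    rw [ψapp, (proj_m a ha).2.2, (proj_m b hb).2.2, hCz1 a b (proj_m a ha).2.1]
    simp
  have ψpp : ∀ a ∈ Lp, ∀ b ∈ Lp, ψ a b = 0 := by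
    intro a ha b hb
    rw [ψapp, (proj_p a ha).1, (proj_p b hb).1, hCz1 a b (proj_p a ha).2.1]
    simp
  have ψzm : ∀ w ∈ Lz, ∀ b ∈ Lm, ψ w b = 0 := by
    intro w hw b hb
    rw [ψapp, (proj_z w hw).1, (proj_z w hw).2.2, hCz2 w b (proj_m b hb).2.1]
    simp
  have ψmz : ∀ b ∈ Lm, ∀ w ∈ Lz, ψ b w = 0 := by
    intro b hb w hw
    rw [ψapp, (proj_z w hw).2.2, (proj_z w hw).1, hCz1 b w (proj_m b hb).2.1]
    simp
  have ψzp : ∀ w ∈ Lz, ∀ b ∈ Lp, ψ w b = 0 := by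
    intro w hw b hb
    rw [ψapp, (proj_z w hw).1, (proj_p b hb).1, hCz2 w b (proj_p b hb).2.1]
    simp
  have ψpz : ∀ b ∈ Lp, ∀ w ∈ Lz, ψ b w = 0 := by
    intro b hb w hw
    rw [ψapp, (proj_z w hw).1, (proj_p b hb).1, hCz1 b w (proj_p b hb).2.1]
    simp
  have ψzz : ∀ w ∈ Lz, ∀ z ∈ Lz, ψ w z = C w z := by
    intro w hw z hz'
    rw [ψapp, (proj_z w hw).1, (proj_z z hz').1]
    simp
  -- ψ on a bracket against Lz
  have ψbr : ∀ a ∈ Lm, ∀ b ∈ Lp, ∀ z ∈ Lz, ψ ⁅a, b⁆ z = B ⁅a, z⁆ b + B a ⁅b, z⁆ := by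
    intro a ha b hb z hz'
    rw [ψzz _ (hmp a ha b hb) z hz', hCbr a ha b hb z hz']
  -- skewness of C on Lz × Lz
  have Cskew : ∀ w ∈ Lz, ∀ z ∈ Lz, C w z = -C z w := by
    intro w hw
    rw [hz] at hw
    induction hw using Submodule.span_induction with
    | mem x hx =>
      obtain ⟨a, ha, b, hb, rfl⟩ := hx
      intro z hzmem
      rw [hz] at hzmem
      induction hzmem using Submodule.span_induction with
      | mem y hy =>
        obtain ⟨c, hc, d, hd, rfl⟩ := hy
        rw [hCbr a ha b hb _ (hz ▸ hmp c hc d hd), hCbr c hc d hd _ (hz ▸ hmp a ha b hb)]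
        rw [hB a ha c hc b hb d hd]
        rw [← lie_skew ⁅a, b⁆ c, ← lie_skew ⁅a, b⁆ d]
        simp only [map_neg, LinearMap.neg_apply]
        ring
      | zero => simp
      | add y1 y2 _ _ ih1 ih2 =>
        simp only [map_add, LinearMap.add_apply] at ih1 ih2 ⊢
        rw [ih1, ih2]; ring
      | smul r y _ ih =>
        simp only [map_smul, LinearMap.smul_apply, smul_eq_mul] at ih ⊢
        rw [ih]; ring
    | zero => intro z hzmem; simp
    | add w1 w2 _ _ ih1 ih2 =>
      intro z hzmem
      have h1 := ih1 z hzmem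
      have h2 := ih2 z hzmem
      simp only [map_add, LinearMap.add_apply] at h1 h2 ⊢
      rw [h1, h2]; ring
    | smul r w' _ ih =>
      intro z hzmem
      have h1 := ih z hzmem
      simp only [map_smul, LinearMap.smul_apply, smul_eq_mul] at h1 ⊢
      rw [h1]; ring
  -- skewness of ψ
  have ψskew : ∀ x y : L, ψ x y = -ψ y x := by
    intro x y
    rw [ψapp, ψapp, hCproj x y, hCproj y x,
      Cskew (πz x) (hπz x) (πz y) (hπz y)]
    ring
  -- cocycle identity
  have core_mzp : ∀ a ∈ Lm, ∀ w ∈ Lz, ∀ b ∈ Lp,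
      ψ ⁅a, w⁆ b + ψ ⁅w, b⁆ a + ψ ⁅b, a⁆ w = 0 := by
    intro a ha w hw b hb
    rw [ψmp _ (bmz a ha w hw) b hb, ψpm a ha _ (hzp w hw b hb),
      ← lie_skew b a, map_neg, LinearMap.neg_apply, ψbr a ha b hb w hw,
      ← lie_skew b w]
    simp only [map_neg, LinearMap.neg_apply]
    ring
  have core_zzz : ∀ u ∈ Lz, ∀ z ∈ Lz, ∀ w ∈ Lz,
      ψ ⁅u, w⁆ z + ψ ⁅w, z⁆ u + ψ ⁅z, u⁆ w = 0 := by
    intro u hu z hz' w hw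
    rw [hz] at hw
    induction hw using Submodule.span_induction with
    | mem x hx =>
      obtain ⟨a, ha, b, hb, rfl⟩ := hx
      rw [leibniz_lie u a b, ← lie_skew ⁅a, b⁆ z, leibniz_lie z a b,
        ψskew ⁅z, u⁆ ⁅a, b⁆]
      simp only [map_add, map_neg, LinearMap.add_apply, LinearMap.neg_apply]
      rw [ψbr _ (hzm u hu a ha) b hb z hz',
        ψbr a ha _ (hzp u hu b hb) z hz',
        ψbr _ (hzm z hz' a ha) b hb u hu,
        ψbr a ha _ (hzp z hz' b hb) u hu,
        ψbr a ha b hb _ (hzz z hz' u hu)]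
      rw [leibniz_lie a z u, leibniz_lie b z u]
      simp only [← lie_skew u a, ← lie_skew z a, ← lie_skew u b, ← lie_skew z b,
        ← lie_skew ⁅a, u⁆ z, ← lie_skew ⁅b, u⁆ z, neg_lie, lie_neg,
        map_neg, map_add, LinearMap.neg_apply, LinearMap.add_apply]
      ring
    | zero => simp
    | add w1 w2 _ _ ih1 ih2 =>
      simp only [lie_add, add_lie, map_add, LinearMap.add_apply] at ih1 ih2 ⊢
      linear_combination ih1 + ih2
    | smul r w' _ ih =>
      simp only [lie_smul, smul_lie, map_smul, LinearMap.smul_apply, smul_eq_mul] at ih ⊢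
      linear_combination r * ih
  have ψcocycle : ∀ x y z : L, ψ ⁅x, y⁆ z + ψ ⁅y, z⁆ x + ψ ⁅z, x⁆ y = 0 := by
    have main : ∀ x y z : L, x ∈ Lm ∨ x ∈ Lz ∨ x ∈ Lp → y ∈ Lm ∨ y ∈ Lz ∨ y ∈ Lp →
        z ∈ Lm ∨ z ∈ Lz ∨ z ∈ Lp → ψ ⁅x, y⁆ z + ψ ⁅y, z⁆ x + ψ ⁅z, x⁆ y = 0 := by
      rintro x y z (hx | hx | hx) (hy | hy | hy) (hz2 | hz2 | hz2)
      · rw [hmm x hx y hy, hmm y hy z hz2, hmm z hz2 x hx]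
        simp
      · rw [hmm x hx y hy, ψmm _ (bmz y hy z hz2) x hx, ψmm _ (hzm z hz2 x hx) y hy]
        simp
      · rw [hmm x hx y hy, ψzm _ (hmp y hy z hz2) x hx, ψzm _ (bpm z hz2 x hx) y hy]
        simp
      · rw [ψmm _ (bmz x hx y hy) z hz2, ψmm _ (hzm y hy z hz2) x hx, hmm z hz2 x hx]
        simp
      · rw [ψmz _ (bmz x hx y hy) z hz2, ψzm _ (hzz y hy z hz2) x hx, ψmz _ (hzm z hz2 x hx) y hy]
        simp
      · exact core_mzp x hx y hy z hz2
      · rw [ψzm _ (hmp x hx y hy) z hz2, ψzm _ (bpm y hy z hz2) x hx, hmm z hz2 x hx]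
        simp
      · rw [← lie_skew x y, ← lie_skew y z, ← lie_skew z x]
        simp only [map_neg, LinearMap.neg_apply]
        linear_combination -(core_mzp x hx z hz2 y hy)
      · rw [ψzp _ (hmp x hx y hy) z hz2, hpp y hy z hz2, ψzp _ (bpm z hz2 x hx) y hy]
        simp
      · rw [ψmm _ (hzm x hx y hy) z hz2, hmm y hy z hz2, ψmm _ (bmz z hz2 x hx) y hy]
        simp
      · rw [ψmz _ (hzm x hx y hy) z hz2, ψmz _ (bmz y hy z hz2) x hx, ψzm _ (hzz z hz2 x hx) y hy]
        simp
      · rw [← lie_skew x y, ← lie_skew y z, ← lie_skew z x]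
        simp only [map_neg, LinearMap.neg_apply]
        linear_combination -(core_mzp y hy x hx z hz2)
      · rw [ψzm _ (hzz x hx y hy) z hz2, ψmz _ (hzm y hy z hz2) x hx, ψmz _ (bmz z hz2 x hx) y hy]
        simp
      · exact core_zzz x hx z hz2 y hy
      · rw [ψzp _ (hzz x hx y hy) z hz2, ψpz _ (hzp y hy z hz2) x hx, ψpz _ (bpz z hz2 x hx) y hy]
        simp
      · linear_combination core_mzp z hz2 x hx y hy
      · rw [ψpz _ (hzp x hx y hy) z hz2, ψpz _ (bpz y hy z hz2) x hx, ψzp _ (hzz z hz2 x hx) y hy]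
        simp
      · rw [ψpp _ (hzp x hx y hy) z hz2, hpp y hy z hz2, ψpp _ (bpz z hz2 x hx) y hy]
        simp
      · rw [ψzm _ (bpm x hx y hy) z hz2, hmm y hy z hz2, ψzm _ (hmp z hz2 x hx) y hy]
        simp
      · linear_combination core_mzp y hy z hz2 x hx
      · rw [ψzp _ (bpm x hx y hy) z hz2, ψzp _ (hmp y hy z hz2) x hx, hpp z hz2 x hx]
        simp
      · rw [← lie_skew x y, ← lie_skew y z, ← lie_skew z x]
        simp only [map_neg, LinearMap.neg_apply]
        linear_combination -(core_mzp z hz2 y hy x hx)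
      · rw [ψpz _ (bpz x hx y hy) z hz2, ψzp _ (hzz y hy z hz2) x hx, ψpz _ (hzp z hz2 x hx) y hy]
        simp
      · rw [ψpp _ (bpz x hx y hy) z hz2, ψpp _ (hzp y hy z hz2) x hx, hpp z hz2 x hx]
        simp
      · rw [hpp x hx y hy, ψzp _ (bpm y hy z hz2) x hx, ψzp _ (hmp z hz2 x hx) y hy]
        simp
      · rw [hpp x hx y hy, ψpp _ (bpz y hy z hz2) x hx, ψpp _ (hzp z hz2 x hx) y hy]
        simp
      · rw [hpp x hx y hy, hpp y hy z hz2, hpp z hz2 x hx]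
        simp
    intro x y z
    calc ψ ⁅x, y⁆ z + ψ ⁅y, z⁆ x + ψ ⁅z, x⁆ y
        = ψ ⁅πm x + πz x + πp x, πm y + πz y + πp y⁆ (πm z + πz z + πp z)
          + ψ ⁅πm y + πz y + πp y, πm z + πz z + πp z⁆ (πm x + πz x + πp x)
          + ψ ⁅πm z + πz z + πp z, πm x + πz x + πp x⁆ (πm y + πz y + πp y) := by
          rw [← hsum x, ← hsum y, ← hsum z]
      _ = 0 := by
          simp only [lie_add, add_lie, map_add, LinearMap.add_apply]
          linear_combination main (πm x) (πm y) (πm z) (Or.inl (hπm x)) (Or.inl (hπm y)) (Or.inl (hπm z)) +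
          main (πm x) (πm y) (πz z) (Or.inl (hπm x)) (Or.inl (hπm y)) (Or.inr (Or.inl (hπz z))) +
          main (πm x) (πm y) (πp z) (Or.inl (hπm x)) (Or.inl (hπm y)) (Or.inr (Or.inr (hπp z))) +
          main (πm x) (πz y) (πm z) (Or.inl (hπm x)) (Or.inr (Or.inl (hπz y))) (Or.inl (hπm z)) +
          main (πm x) (πz y) (πz z) (Or.inl (hπm x)) (Or.inr (Or.inl (hπz y))) (Or.inr (Or.inl (hπz z))) +
          main (πm x) (πz y) (πp z) (Or.inl (hπm x)) (Or.inr (Or.inl (hπz y))) (Or.inr (Or.inr (hπp z))) +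
          main (πm x) (πp y) (πm z) (Or.inl (hπm x)) (Or.inr (Or.inr (hπp y))) (Or.inl (hπm z)) +
          main (πm x) (πp y) (πz z) (Or.inl (hπm x)) (Or.inr (Or.inr (hπp y))) (Or.inr (Or.inl (hπz z))) +
          main (πm x) (πp y) (πp z) (Or.inl (hπm x)) (Or.inr (Or.inr (hπp y))) (Or.inr (Or.inr (hπp z))) +
          main (πz x) (πm y) (πm z) (Or.inr (Or.inl (hπz x))) (Or.inl (hπm y)) (Or.inl (hπm z)) +
          main (πz x) (πm y) (πz z) (Or.inr (Or.inl (hπz x))) (Or.inl (hπm y)) (Or.inr (Or.inl (hπz z))) +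
          main (πz x) (πm y) (πp z) (Or.inr (Or.inl (hπz x))) (Or.inl (hπm y)) (Or.inr (Or.inr (hπp z))) +
          main (πz x) (πz y) (πm z) (Or.inr (Or.inl (hπz x))) (Or.inr (Or.inl (hπz y))) (Or.inl (hπm z)) +
          main (πz x) (πz y) (πz z) (Or.inr (Or.inl (hπz x))) (Or.inr (Or.inl (hπz y))) (Or.inr (Or.inl (hπz z))) +
          main (πz x) (πz y) (πp z) (Or.inr (Or.inl (hπz x))) (Or.inr (Or.inl (hπz y))) (Or.inr (Or.inr (hπp z))) +
          main (πz x) (πp y) (πm z) (Or.inr (Or.inl (hπz x))) (Or.inr (Or.inr (hπp y))) (Or.inl (hπm z)) +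
          main (πz x) (πp y) (πz z) (Or.inr (Or.inl (hπz x))) (Or.inr (Or.inr (hπp y))) (Or.inr (Or.inl (hπz z))) +
          main (πz x) (πp y) (πp z) (Or.inr (Or.inl (hπz x))) (Or.inr (Or.inr (hπp y))) (Or.inr (Or.inr (hπp z))) +
          main (πp x) (πm y) (πm z) (Or.inr (Or.inr (hπp x))) (Or.inl (hπm y)) (Or.inl (hπm z)) +
          main (πp x) (πm y) (πz z) (Or.inr (Or.inr (hπp x))) (Or.inl (hπm y)) (Or.inr (Or.inl (hπz z))) +
          main (πp x) (πm y) (πp z) (Or.inr (Or.inr (hπp x))) (Or.inl (hπm y)) (Or.inr (Or.inr (hπp z))) +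
          main (πp x) (πz y) (πm z) (Or.inr (Or.inr (hπp x))) (Or.inr (Or.inl (hπz y))) (Or.inl (hπm z)) +
          main (πp x) (πz y) (πz z) (Or.inr (Or.inr (hπp x))) (Or.inr (Or.inl (hπz y))) (Or.inr (Or.inl (hπz z))) +
          main (πp x) (πz y) (πp z) (Or.inr (Or.inr (hπp x))) (Or.inr (Or.inl (hπz y))) (Or.inr (Or.inr (hπp z))) +
          main (πp x) (πp y) (πm z) (Or.inr (Or.inr (hπp x))) (Or.inr (Or.inr (hπp y))) (Or.inl (hπm z)) +
          main (πp x) (πp y) (πz z) (Or.inr (Or.inr (hπp x))) (Or.inr (Or.inr (hπp y))) (Or.inr (Or.inl (hπz z))) +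
          main (πp x) (πp y) (πp z) (Or.inr (Or.inr (hπp x))) (Or.inr (Or.inr (hπp y))) (Or.inr (Or.inr (hπp z)))
  refine ⟨ψ, ⟨ψskew, ψcocycle, ψmp, ψmm, ψpp, ψzm, ψzp⟩, ?_⟩
  rintro ψ' ⟨hskew', hcoc', hmp', hmm', hpp', hzm', hzp'⟩
  have eq_br : ∀ a ∈ Lm, ∀ b ∈ Lp, ∀ z ∈ Lz, ψ' ⁅a, b⁆ z = B ⁅a, z⁆ b + B a ⁅b, z⁆ := by
    intro a ha b hb z hzmem
    have h2 : ψ' ⁅b, z⁆ a = -B a ⁅b, z⁆ := by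
      rw [hskew' ⁅b, z⁆ a, hmp' a ha ⁅b, z⁆ (bpz b hb z hzmem)]
    have h3 : ψ' ⁅z, a⁆ b = -B ⁅a, z⁆ b := by
      rw [hmp' ⁅z, a⁆ (hzm z hzmem a ha) b hb, (lie_skew z a).symm, map_neg,
        LinearMap.neg_apply]
    linear_combination hcoc' a b z - h2 - h3
  have eq_zz : ∀ w ∈ Lz, ∀ z ∈ Lz, ψ' w z = ψ w z := by
    intro w hw z hzmem
    rw [hz] at hw
    induction hw using Submodule.span_induction with
    | mem x hx =>
      obtain ⟨a, ha, b, hb, rfl⟩ := hx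
      rw [eq_br a ha b hb z hzmem, ψbr a ha b hb z hzmem]
    | zero => simp
    | add w1 w2 _ _ ih1 ih2 =>
      simp only [map_add, LinearMap.add_apply] at ih1 ih2 ⊢
      rw [ih1, ih2]
    | smul r w' _ ih =>
      simp only [map_smul, LinearMap.smul_apply] at ih ⊢
      rw [ih]
  have eq_all : ∀ u : L, u ∈ Lm ∨ u ∈ Lz ∨ u ∈ Lp → ∀ v : L, v ∈ Lm ∨ v ∈ Lz ∨ v ∈ Lp →
      ψ' u v = ψ u v := by
    rintro u (hu | hu | hu) v (hv | hv | hv)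
    · rw [hmm' u hu v hv, ψmm u hu v hv]
    · rw [hskew' u v, hzm' v hv u hu, ψmz u hu v hv]; simp
    · rw [hmp' u hu v hv, ψmp u hu v hv]
    · rw [hzm' u hu v hv, ψzm u hu v hv]
    · exact eq_zz u hu v hv
    · rw [hzp' u hu v hv, ψzp u hu v hv]
    · rw [hskew' u v, hmp' v hv u hu, ψpm v hv u hu]
    · rw [hskew' u v, hzp' v hv u hu, ψpz u hu v hv]; simp
    · rw [hpp' u hu v hv, ψpp u hu v hv]
  refine LinearMap.ext fun x => LinearMap.ext fun y => ?_
  calc ψ' x y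
      = ψ' (πm x + πz x + πp x) (πm y + πz y + πp y) := by rw [← hsum x, ← hsum y]
    _ = ψ (πm x + πz x + πp x) (πm y + πz y + πp y) := by
        simp only [map_add, LinearMap.add_apply]
        linear_combination
          eq_all (πm x) (Or.inl (hπm x)) (πm y) (Or.inl (hπm y)) +
          eq_all (πm x) (Or.inl (hπm x)) (πz y) (Or.inr (Or.inl (hπz y))) +
          eq_all (πm x) (Or.inl (hπm x)) (πp y) (Or.inr (Or.inr (hπp y))) +
          eq_all (πz x) (Or.inr (Or.inl (hπz x))) (πm y) (Or.inl (hπm y)) +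
          eq_all (πz x) (Or.inr (Or.inl (hπz x))) (πz y) (Or.inr (Or.inl (hπz y))) +
          eq_all (πz x) (Or.inr (Or.inl (hπz x))) (πp y) (Or.inr (Or.inr (hπp y))) +
          eq_all (πp x) (Or.inr (Or.inr (hπp x))) (πm y) (Or.inl (hπm y)) +
          eq_all (πp x) (Or.inr (Or.inr (hπp x))) (πz y) (Or.inr (Or.inl (hπz y))) +
          eq_all (πp x) (Or.inr (Or.inr (hπp x))) (πp y) (Or.inr (Or.inr (hπp y)))
    _ = ψ x y := by rw [← hsum x, ← hsum y]
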